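/- Let G = ({1,...,n}, E) be a connected undirected graph in which every node is its own neighbor, and let A be the lazy Metropolis matrix of G, defined by a_ij = 1/(2 max(d(i), d(j))) for j ∈ N(i), j ≠ i, a_ii = 1 − ∑_{j ∈ N(i), j ≠ i} a_ij, and a_ij = 0 otherwise. If x(t+1) = A x(t), then for every t ≥ 0, ||x(t) − x̄ 1||₂² ≤ (1 − 1/(37 n²))^t · ||x(0) − x̄ 1||₂². -/

import Mathlib

open Classical

section Walks

variable {n : ℕ} (E : Fin n → Fin n → Prop)

def HasWalk (i j : Fin n) (k : ℕ) : Prop :=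
  ∃ p : ℕ → Fin n, p 0 = i ∧ p k = j ∧ ∀ t < k, E (p t) (p (t + 1))

variable {E}

lemma hasWalk_refl (i : Fin n) : HasWalk E i i 0 := ⟨fun _ => i, rfl, rfl, by omega⟩

lemma hasWalk_of_rel {i j : Fin n} (h : E i j) : HasWalk E i j 1 :=
  ⟨fun t => if t = 0 then i else j, by simp, by simp, by
    intro t ht
    interval_cases t
    simpa using h⟩

lemma hasWalk_trans {i j l : Fin n} {k m : ℕ} (h1 : HasWalk E i j k)
    (h2 : HasWalk E j l m) : HasWalk E i l (k + m) := by
  obtain ⟨p, hp0, hpk, hp⟩ := h1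
  obtain ⟨q, hq0, hqm, hq⟩ := h2
  refine ⟨fun t => if t ≤ k then p t else q (t - k), by simp [hp0], ?_, ?_⟩
  · dsimp only
    by_cases hm : k + m ≤ k
    · have : m = 0 := by omega
      subst this
      rw [if_pos hm]
      have : k + 0 = k := by omega
      rw [this, hpk, ← hq0, hqm]
    · rw [if_neg hm]
      have : k + m - k = m := by omega
      rw [this, hqm]
  · intro t ht
    dsimp only
    by_cases h1 : t + 1 ≤ k
    · rw [if_pos (by omega), if_pos h1]
      exact hp t (by omega)
    · by_cases h2' : t ≤ k
      · have htk : t = k := by omega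
        subst htk
        rw [if_pos le_rfl, if_neg h1, hpk]
        have h3 : t + 1 - t = 1 := by omega
        rw [h3]
        have := hq 0 (by omega)
        rwa [hq0] at this
      · rw [if_neg h2', if_neg h1]
        have h3 : t + 1 - k = (t - k) + 1 := by omega
        rw [h3]
        exact hq (t - k) (by omega)

lemma hasWalk_sub {p : ℕ → Fin n} {k : ℕ}
    (hp : ∀ t < k, E (p t) (p (t + 1)))
    (s t : ℕ) (hst : s ≤ t) (htk : t ≤ k) : HasWalk E (p s) (p t) (t - s) := by
  refine ⟨fun u => p (s + u), by simp, ?_, ?_⟩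
  · dsimp only
    have : s + (t - s) = t := by omega
    rw [this]
  · intro u hu
    dsimp only
    have h3 : s + (u + 1) = (s + u) + 1 := by omega
    rw [h3]
    exact hp (s + u) (by omega)

lemma exists_hasWalk {i j : Fin n} (h : Relation.ReflTransGen E i j) :
    ∃ k, HasWalk E i j k := by
  induction h with
  | refl => exact ⟨0, hasWalk_refl i⟩
  | tail h1 h2 ih =>
    obtain ⟨k, hk⟩ := ih
    exact ⟨k + 1, hasWalk_trans hk (hasWalk_of_rel h2)⟩

end Walks

section Dist

variable {n : ℕ} {E : Fin n → Fin n → Prop}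
  (hconn : ∀ i j, Relation.ReflTransGen E i j)

noncomputable def dst (i j : Fin n) : ℕ :=
  Nat.find (exists_hasWalk (hconn i j))

lemma dst_spec (i j : Fin n) : HasWalk E i j (dst hconn i j) :=
  Nat.find_spec (exists_hasWalk (hconn i j))

lemma dst_le {i j : Fin n} {k : ℕ} (h : HasWalk E i j k) : dst hconn i j ≤ k :=
  Nat.find_le h

lemma dst_self (i : Fin n) : dst hconn i i = 0 :=
  Nat.le_zero.mp (dst_le hconn (hasWalk_refl i))

lemma dst_triangle (i j l : Fin n) :
    dst hconn i l ≤ dst hconn i j + dst hconn j l :=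
  dst_le hconn (hasWalk_trans (dst_spec hconn i j) (dst_spec hconn j l))

lemma dst_le_two_of_common (hsymm : ∀ i j, E i j → E j i) {u v w : Fin n}
    (h1 : E u v) (h2 : E w v) : dst hconn u w ≤ 2 :=
  dst_le hconn (hasWalk_trans (hasWalk_of_rel h1) (hasWalk_of_rel (hsymm w v h2)))

/-- On a geodesic, the distance between intermediate points is the index difference. -/
lemma dst_geodesic {i j : Fin n} {p : ℕ → Fin n}
    (hp0 : p 0 = i) (hpk : p (dst hconn i j) = j)
    (hp : ∀ t < dst hconn i j, E (p t) (p (t + 1)))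
    {s t : ℕ} (hst : s ≤ t) (htk : t ≤ dst hconn i j) :
    dst hconn (p s) (p t) = t - s := by
  set k := dst hconn i j with hk
  have h1 : dst hconn (p s) (p t) ≤ t - s := dst_le hconn (hasWalk_sub hp s t hst htk)
  have h2 : dst hconn i (p s) ≤ s := by
    have := dst_le hconn (hasWalk_sub hp 0 s (by omega) (by omega))
    rwa [hp0, Nat.sub_zero] at this
  have h3 : dst hconn (p t) j ≤ k - t := by
    have := dst_le hconn (hasWalk_sub hp t k htk le_rfl)
    rwa [hpk] at this
  have h4 : k ≤ dst hconn i (p s) + dst hconn (p s) (p t) + dst hconn (p t) j := by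
    calc k ≤ dst hconn i (p t) + dst hconn (p t) j := dst_triangle hconn i (p t) j
    _ ≤ (dst hconn i (p s) + dst hconn (p s) (p t)) + dst hconn (p t) j := by
        have := dst_triangle hconn i (p s) (p t)
        omega
  omega

lemma geodesic_inj {i j : Fin n} {p : ℕ → Fin n}
    (hp0 : p 0 = i) (hpk : p (dst hconn i j) = j)
    (hp : ∀ t < dst hconn i j, E (p t) (p (t + 1)))
    {s t : ℕ} (hst : s < t) (htk : t ≤ dst hconn i j) : p s ≠ p t := by
  intro hEq
  have := dst_geodesic hconn hp0 hpk hp (le_of_lt hst) htk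
  rw [hEq, dst_self] at this
  omega

end Dist

section Degree

variable {n : ℕ} {E : Fin n → Fin n → Prop}
  (hconn : ∀ i j, Relation.ReflTransGen E i j)

/-- Sum of (closed) degrees along a geodesic is at most `3n`. -/
lemma geodesic_degree_sum (hsymm : ∀ i j, E i j → E j i) (hrefl : ∀ i, E i i)
    (d : Fin n → ℕ)
    (hd : ∀ i, d i = (Finset.univ.filter fun j => j ≠ i ∧ E i j).card)
    {i j : Fin n} {p : ℕ → Fin n}
    (hp0 : p 0 = i) (hpk : p (dst hconn i j) = j)
    (hp : ∀ t < dst hconn i j, E (p t) (p (t + 1))) :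
    ∑ t ∈ Finset.range (dst hconn i j + 1), (d (p t) + 1) ≤ 3 * n := by
  classical
  set k := dst hconn i j with hk
  set N : ℕ → Finset (Fin n) := fun t => Finset.univ.filter (fun v => E (p t) v) with hN
  have hcard : ∀ t, (N t).card = d (p t) + 1 := by
    intro t
    have : N t = insert (p t) (Finset.univ.filter fun v => v ≠ p t ∧ E (p t) v) := by
      ext v
      simp only [hN, Finset.mem_filter, Finset.mem_univ, true_and, Finset.mem_insert]
      constructor
      · intro hv
        by_cases hvp : v = p t
        · exact Or.inl hvp
        · exact Or.inr ⟨hvp, hv⟩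
      · rintro (rfl | ⟨_, hv⟩)
        · exact hrefl _
        · exact hv
    rw [this, Finset.card_insert_of_notMem (by simp), hd (p t)]
  have hdisj : ∀ s ∈ Finset.range (k + 1), ∀ t ∈ Finset.range (k + 1),
      s ≠ t → s % 3 = t % 3 → Disjoint (N s) (N t) := by
    intro s hs t ht hne hmod
    wlog hst : s < t generalizing s t
    · exact (this t ht s hs (Ne.symm hne) hmod.symm (by omega)).symm
    rw [Finset.disjoint_left]
    intro v hvs hvt
    simp only [hN, Finset.mem_filter, Finset.mem_univ, true_and] at hvs hvt
    have h2 : dst hconn (p s) (p t) ≤ 2 := dst_le_two_of_common hconn hsymm hvs hvt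
    have h3 : dst hconn (p s) (p t) = t - s :=
      dst_geodesic hconn hp0 hpk hp (le_of_lt hst) (by have := Finset.mem_range.mp ht; omega)
    omega
  calc ∑ t ∈ Finset.range (k + 1), (d (p t) + 1)
      = ∑ t ∈ Finset.range (k + 1), (N t).card := by
        exact Finset.sum_congr rfl fun t _ => (hcard t).symm
    _ = ∑ r ∈ Finset.range 3, ∑ t ∈ (Finset.range (k + 1)).filter (fun t => t % 3 = r),
          (N t).card := by
        rw [Finset.sum_fiberwise_of_maps_to]
        intro t _
        exact Finset.mem_range.mpr (Nat.mod_lt t (by norm_num))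
    _ ≤ ∑ r ∈ Finset.range 3, n := by
        apply Finset.sum_le_sum
        intro r _
        rw [← Finset.card_biUnion]
        · exact le_trans (Finset.card_le_univ _) (by simp)
        · intro s hs t ht hne
          simp only [Finset.coe_filter, Finset.mem_coe, Finset.mem_filter, Set.mem_setOf_eq] at hs ht
          exact hdisj s hs.1 t ht.1 hne (hs.2.trans ht.2.symm)
    _ = 3 * n := by simp [Finset.sum_const, mul_comm]

end Degree

section Poincare

open Finset

variable {n : ℕ} {E : Fin n → Fin n → Prop}

noncomputable def Wgt (E : Fin n → Fin n → Prop) (d : Fin n → ℕ) (i j : Fin n) : ℝ :=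
  if i ≠ j ∧ E i j then 1 / (2 * (max (d i) (d j) : ℝ)) else 0

lemma Wgt_nonneg (d : Fin n → ℕ) (i j : Fin n) : 0 ≤ Wgt E d i j := by
  unfold Wgt
  split
  · apply div_nonneg (by norm_num)
    positivity
  · exact le_refl 0

lemma pair_bound (hconn : ∀ i j, Relation.ReflTransGen E i j)
    (hsymm : ∀ i j, E i j → E j i) (hrefl : ∀ i, E i i)
    (d : Fin n → ℕ)
    (hd : ∀ i, d i = (Finset.univ.filter fun j => j ≠ i ∧ E i j).card)
    (hd1 : ∀ i, 1 ≤ d i) (y : Fin n → ℝ) (i j : Fin n) :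
    (y i - y j) ^ 2 ≤ (12 * n) * ∑ a, ∑ b, Wgt E d a b * (y a - y b) ^ 2 := by
  set S := ∑ a, ∑ b, Wgt E d a b * (y a - y b) ^ 2 with hSdef
  have hS0 : 0 ≤ S := by
    apply Finset.sum_nonneg
    intro a _
    apply Finset.sum_nonneg
    intro b _
    exact mul_nonneg (Wgt_nonneg d a b) (sq_nonneg _)
  obtain ⟨p, hp0, hpk, hp⟩ := dst_spec hconn i j
  set k := dst hconn i j with hk
  set c : ℕ → ℝ := fun t => 2 * (max (d (p t)) (d (p (t + 1))) : ℝ) with hc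
  have hc_pos : ∀ t, 0 < c t := by
    intro t
    have : 1 ≤ max (d (p t)) (d (p (t + 1))) := le_trans (hd1 (p t)) (le_max_left _ _)
    have : (1 : ℝ) ≤ (max (d (p t)) (d (p (t + 1))) : ℝ) := by exact_mod_cast this
    simp only [hc]
    nlinarith
  have telescope : ∑ t ∈ Finset.range k, (y (p t) - y (p (t + 1))) = y i - y j := by
    rw [Finset.sum_range_sub' (fun t => y (p t)), hp0, hpk]
  have hCS : (y i - y j) ^ 2 ≤
      (∑ t ∈ Finset.range k, c t) *
        (∑ t ∈ Finset.range k, (y (p t) - y (p (t + 1))) ^ 2 / c t) := by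
    rw [← telescope]
    apply Finset.sum_sq_le_sum_mul_sum_of_sq_eq_mul
    · intro t _; exact le_of_lt (hc_pos t)
    · intro t _; exact div_nonneg (sq_nonneg _) (le_of_lt (hc_pos t))
    · intro t _
      exact (mul_div_cancel₀ _ (ne_of_gt (hc_pos t))).symm
  have hterm : ∀ t < k, (y (p t) - y (p (t + 1))) ^ 2 / c t =
      Wgt E d (p t) (p (t + 1)) * (y (p t) - y (p (t + 1))) ^ 2 := by
    intro t ht
    have hne : p t ≠ p (t + 1) := geodesic_inj hconn hp0 hpk hp (by omega) (by omega)
    have hE : E (p t) (p (t + 1)) := hp t ht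
    rw [Wgt, if_pos ⟨hne, hE⟩]
    rw [div_eq_mul_inv, mul_comm, one_div]
  have hPleS : (∑ t ∈ Finset.range k, (y (p t) - y (p (t + 1))) ^ 2 / c t) ≤ S := by
    rw [Finset.sum_congr rfl (fun t ht => hterm t (Finset.mem_range.mp ht))]
    have hinj : Set.InjOn (fun t => (p t, p (t + 1))) (Finset.range k) := by
      intro s hs t ht hst
      simp only [Finset.coe_range, Set.mem_Iio] at hs ht
      by_contra hne
      rcases Nat.lt_or_ge s t with h | h
      · exact geodesic_inj hconn hp0 hpk hp h (by omega) (congrArg Prod.fst hst)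
      · have h' : t < s := by omega
        exact geodesic_inj hconn hp0 hpk hp h' (by omega) (congrArg Prod.fst hst).symm
    have := Finset.sum_image (f := fun q : Fin n × Fin n => Wgt E d q.1 q.2 * (y q.1 - y q.2) ^ 2)
      (g := fun t => (p t, p (t + 1))) (s := Finset.range k) (fun s hs t ht h => hinj hs ht h)
    rw [hSdef, ← Finset.sum_product']
    calc ∑ t ∈ Finset.range k, Wgt E d (p t) (p (t + 1)) * (y (p t) - y (p (t + 1))) ^ 2
        = ∑ q ∈ (Finset.range k).image (fun t => (p t, p (t + 1))),
            Wgt E d q.1 q.2 * (y q.1 - y q.2) ^ 2 := this.symm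
      _ ≤ ∑ q ∈ Finset.univ ×ˢ Finset.univ, Wgt E d q.1 q.2 * (y q.1 - y q.2) ^ 2 := by
          apply Finset.sum_le_sum_of_subset_of_nonneg
          · intro q _; simp
          · intro q _ _; exact mul_nonneg (Wgt_nonneg d _ _) (sq_nonneg _)
  have hcsum : (∑ t ∈ Finset.range k, c t) ≤ 12 * n := by
    set g : ℕ → ℝ := fun t => (d (p t) : ℝ) + 1 with hg
    have hg0 : ∀ t, 0 ≤ g t := by intro t; positivity
    have hcle : ∀ t, c t ≤ 2 * (g t + g (t + 1)) := by
      intro t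
      simp only [hc, hg]
      have h1 : (max (d (p t)) (d (p (t + 1))) : ℝ) ≤ (d (p t) : ℝ) + (d (p (t + 1)) : ℝ) := by
        have : max (d (p t)) (d (p (t + 1))) ≤ d (p t) + d (p (t + 1)) := by omega
        exact_mod_cast le_trans this le_rfl
      nlinarith
    have hGsum : ∑ t ∈ Finset.range (k + 1), g t ≤ 3 * n := by
      have hnat := geodesic_degree_sum hconn hsymm hrefl d hd hp0 hpk hp
      have : ((∑ t ∈ Finset.range (k + 1), (d (p t) + 1) : ℕ) : ℝ) ≤ ((3 * n : ℕ) : ℝ) := by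
        exact_mod_cast hnat
      rw [Nat.cast_sum] at this
      simpa [hg] using this
    have h1 : ∑ t ∈ Finset.range k, g t ≤ ∑ t ∈ Finset.range (k + 1), g t := by
      apply Finset.sum_le_sum_of_subset_of_nonneg
      · exact Finset.range_subset_range.mpr (by omega)
      · intro t _ _; exact hg0 t
    have h2 : ∑ t ∈ Finset.range k, g (t + 1) ≤ ∑ t ∈ Finset.range (k + 1), g t := by
      rw [Finset.sum_range_succ' g k]
      have := hg0 0
      nlinarith [Finset.sum_nonneg (fun t (_ : t ∈ Finset.range k) => hg0 (t + 1))]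
    calc ∑ t ∈ Finset.range k, c t ≤ ∑ t ∈ Finset.range k, 2 * (g t + g (t + 1)) :=
          Finset.sum_le_sum (fun t _ => hcle t)
      _ = 2 * (∑ t ∈ Finset.range k, g t + ∑ t ∈ Finset.range k, g (t + 1)) := by
          rw [← Finset.sum_add_distrib, Finset.mul_sum]
      _ ≤ 2 * (3 * n + 3 * n) := by
          have := le_trans h1 hGsum
          have := le_trans h2 hGsum
          nlinarith
      _ = 12 * n := by ring
  have hcsum0 : 0 ≤ ∑ t ∈ Finset.range k, c t :=
    Finset.sum_nonneg fun t _ => le_of_lt (hc_pos t)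
  have hP0 : 0 ≤ ∑ t ∈ Finset.range k, (y (p t) - y (p (t + 1))) ^ 2 / c t :=
    Finset.sum_nonneg fun t _ => div_nonneg (sq_nonneg _) (le_of_lt (hc_pos t))
  calc (y i - y j) ^ 2 ≤ _ := hCS
    _ ≤ (12 * n) * S := by
        apply mul_le_mul hcsum hPleS hP0
        positivity

lemma degree_pos (hn2 : 2 ≤ n) (hconn : ∀ i j, Relation.ReflTransGen E i j)
    (d : Fin n → ℕ)
    (hd : ∀ i, d i = (Finset.univ.filter fun j => j ≠ i ∧ E i j).card)
    (i : Fin n) : 1 ≤ d i := by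
  by_contra h
  have hdi : d i = 0 := by omega
  have hfe : (Finset.univ.filter fun j => j ≠ i ∧ E i j) = ∅ := by
    apply Finset.card_eq_zero.mp
    rw [← hd i, hdi]
  have hloop : ∀ l, E i l → l = i := by
    intro l hl
    by_contra hne
    have : l ∈ (Finset.univ.filter fun j => j ≠ i ∧ E i j) := by
      simp [hne, hl]
    rw [hfe] at this
    simp at this
  have hstay : ∀ w, Relation.ReflTransGen E i w → w = i := by
    intro w hw
    induction hw with
    | refl => rfl
    | tail h1 h2 ih => exact hloop _ (ih ▸ h2)
  haveI : Nontrivial (Fin n) := Fin.nontrivial_iff_two_le.mpr hn2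
  obtain ⟨j, hj⟩ := exists_ne i
  exact hj (hstay j (hconn i j))

lemma poincare (hn2 : 2 ≤ n) (hconn : ∀ i j, Relation.ReflTransGen E i j)
    (hsymm : ∀ i j, E i j → E j i) (hrefl : ∀ i, E i i)
    (d : Fin n → ℕ)
    (hd : ∀ i, d i = (Finset.univ.filter fun j => j ≠ i ∧ E i j).card)
    (y : Fin n → ℝ) (hy : ∑ i, y i = 0) :
    ∑ i, (y i) ^ 2 ≤ 6 * (n : ℝ) ^ 2 * ∑ a, ∑ b, Wgt E d a b * (y a - y b) ^ 2 := by
  have hd1 : ∀ i, 1 ≤ d i := degree_pos hn2 hconn d hd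
  set S := ∑ a, ∑ b, Wgt E d a b * (y a - y b) ^ 2 with hSdef
  have hexp : ∑ i, ∑ j, (y i - y j) ^ 2 = 2 * n * ∑ i, (y i) ^ 2 := by
    have key : ∀ i : Fin n, ∑ j, (y i - y j) ^ 2 =
        (n : ℝ) * y i ^ 2 - 2 * y i * (∑ j, y j) + ∑ j, y j ^ 2 := by
      intro i
      have h0 : ∑ j, (y i - y j) ^ 2 = ∑ j, (y i ^ 2 - 2 * y i * y j + y j ^ 2) :=
        Finset.sum_congr rfl fun j _ => by ring
      rw [h0, Finset.sum_add_distrib, Finset.sum_sub_distrib, Finset.sum_const,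
        Finset.card_univ, Fintype.card_fin, ← Finset.mul_sum, nsmul_eq_mul]
    calc ∑ i, ∑ j, (y i - y j) ^ 2
        = ∑ i, ((n : ℝ) * y i ^ 2 - 2 * y i * (∑ j, y j) + ∑ j, y j ^ 2) :=
          Finset.sum_congr rfl fun i _ => key i
      _ = ∑ i, ((n : ℝ) * y i ^ 2 + ∑ j, y j ^ 2) :=
          Finset.sum_congr rfl fun i _ => by rw [hy]; ring
      _ = (n : ℝ) * (∑ i, y i ^ 2) + (n : ℝ) * (∑ j, y j ^ 2) := by
          rw [Finset.sum_add_distrib, ← Finset.mul_sum, Finset.sum_const,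
            Finset.card_univ, Fintype.card_fin, nsmul_eq_mul]
      _ = 2 * n * ∑ i, (y i) ^ 2 := by ring
  have hpair : ∑ i, ∑ j, (y i - y j) ^ 2 ≤ (n : ℝ) ^ 2 * ((12 * n) * S) := by
    calc ∑ i, ∑ j, (y i - y j) ^ 2
        ≤ ∑ _i : Fin n, ∑ _j : Fin n, (12 * (n : ℝ)) * S := by
          apply Finset.sum_le_sum
          intro i _
          apply Finset.sum_le_sum
          intro j _
          exact pair_bound hconn hsymm hrefl d hd hd1 y i j
      _ = (n : ℝ) ^ 2 * ((12 * n) * S) := by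
          simp [Finset.sum_const, Finset.card_univ, Fintype.card_fin]
          ring
  have hn0 : (0 : ℝ) < n := by
    have : (2 : ℝ) ≤ n := by exact_mod_cast hn2
    linarith
  rw [hexp] at hpair
  nlinarith [hpair, hn0]

end Poincare

section Step

variable {n : ℕ} {E : Fin n → Fin n → Prop}

lemma step_lemma (hn : 0 < n)
    (hconn : ∀ i j, Relation.ReflTransGen E i j)
    (hsymm : ∀ i j, E i j → E j i) (hrefl : ∀ i, E i i)
    (d : Fin n → ℕ)
    (hd : ∀ i, d i = (Finset.univ.filter fun j => j ≠ i ∧ E i j).card)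
    (A : Matrix (Fin n) (Fin n) ℝ)
    (hA : ∀ i j, A i j =
      if j = i then
        1 - ∑ l ∈ Finset.univ.filter (fun l => l ≠ i ∧ E i l),
              1 / (2 * (max (d i) (d l) : ℝ))
      else if E i j then 1 / (2 * (max (d i) (d j) : ℝ)) else 0)
    (y : Fin n → ℝ) (hy : ∑ i, y i = 0) :
    (∑ i, (A.mulVec y i) ^ 2 ≤ (1 - 1 / (37 * (n : ℝ) ^ 2)) * ∑ i, (y i) ^ 2) ∧
      (∑ i, A.mulVec y i = 0) := by
  classical
  have hmv : ∀ i, A.mulVec y i = ∑ j, A i j * y j := by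
    intro i
    simp [Matrix.mulVec, dotProduct]
  -- basic facts about W and A
  have hWdiag : ∀ i, Wgt E d i i = 0 := by
    intro i
    simp [Wgt]
  have hWnonneg : ∀ i j, 0 ≤ Wgt E d i j := fun i j => Wgt_nonneg d i j
  have hWsymm : ∀ i j, Wgt E d i j = Wgt E d j i := by
    intro i j
    unfold Wgt
    by_cases h : i ≠ j ∧ E i j
    · rw [if_pos h, if_pos ⟨h.1.symm, hsymm _ _ h.2⟩, max_comm]
    · rw [if_neg h, if_neg (fun h' => h ⟨h'.1.symm, hsymm _ _ h'.2⟩)]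
  have hAoff : ∀ i j, j ≠ i → A i j = Wgt E d i j := by
    intro i j hji
    rw [hA, if_neg hji]
    unfold Wgt
    by_cases h : E i j
    · rw [if_pos h, if_pos ⟨Ne.symm hji, h⟩]
    · rw [if_neg h, if_neg (fun h' => h h'.2)]
  have hWsum : ∀ i, ∑ j, Wgt E d i j =
      ∑ l ∈ Finset.univ.filter (fun l => l ≠ i ∧ E i l), 1 / (2 * (max (d i) (d l) : ℝ)) := by
    intro i
    rw [Finset.sum_filter]
    refine Finset.sum_congr rfl fun j _ => ?_
    unfold Wgt
    by_cases h : j ≠ i ∧ E i j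
    · rw [if_pos h, if_pos ⟨Ne.symm h.1, h.2⟩]
    · rw [if_neg h, if_neg (fun h' => h ⟨Ne.symm h'.1, h'.2⟩)]
  have hAdiag : ∀ i, A i i = 1 - ∑ j, Wgt E d i j := by
    intro i
    rw [hA, if_pos rfl, hWsum]
  have hWrow_le : ∀ i, ∑ j, Wgt E d i j ≤ 1 / 2 := by
    intro i
    rw [hWsum]
    set F := Finset.univ.filter (fun l => l ≠ i ∧ E i l) with hF
    rcases Finset.eq_empty_or_nonempty F with hFe | hFne
    · rw [hFe]
      norm_num
    · have hdi : 1 ≤ d i := by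
        rw [hd i, ← hF]
        exact Finset.card_pos.mpr hFne
      have hdiR : (1 : ℝ) ≤ (d i : ℝ) := by exact_mod_cast hdi
      have hterm : ∀ l ∈ F, 1 / (2 * (max (d i) (d l) : ℝ)) ≤ 1 / (2 * (d i : ℝ)) := by
        intro l _
        apply one_div_le_one_div_of_le (by linarith)
        have : d i ≤ max (d i) (d l) := le_max_left _ _
        have : (d i : ℝ) ≤ (max (d i) (d l) : ℝ) := by exact_mod_cast this
        linarith
      calc ∑ l ∈ F, 1 / (2 * (max (d i) (d l) : ℝ))
          ≤ ∑ _l ∈ F, 1 / (2 * (d i : ℝ)) := Finset.sum_le_sum hterm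
        _ = (F.card : ℝ) * (1 / (2 * (d i : ℝ))) := by
            rw [Finset.sum_const, nsmul_eq_mul]
        _ = (d i : ℝ) * (1 / (2 * (d i : ℝ))) := by rw [hd i, ← hF]
        _ = 1 / 2 := by
            field_simp
  have hArow : ∀ i, ∑ j, A i j = 1 := by
    intro i
    have hsplit : ∀ j, A i j = (if j = i then (1 - ∑ l, Wgt E d i l) else 0) + Wgt E d i j := by
      intro j
      by_cases h : j = i
      · subst h
        rw [if_pos rfl, hAdiag, hWdiag, add_zero]
      · rw [if_neg h, hAoff i j h, zero_add]
    rw [Finset.sum_congr rfl fun j _ => hsplit j, Finset.sum_add_distrib]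
    rw [Finset.sum_ite_eq' Finset.univ i (fun _ => 1 - ∑ l, Wgt E d i l)]
    simp
  have hAsym : ∀ i j, A i j = A j i := by
    intro i j
    by_cases h : i = j
    · rw [h]
    · rw [hAoff i j (Ne.symm h), hAoff j i h, hWsymm]
  have hAcol : ∀ j, ∑ i, A i j = 1 := by
    intro j
    rw [Finset.sum_congr rfl fun i _ => hAsym i j, hArow]
  -- B matrix
  set B : Fin n → Fin n → ℝ := fun i j => 2 * A i j - if i = j then 1 else 0 with hB
  have hAii_half : ∀ i, (1:ℝ)/2 ≤ A i i := by
    intro i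
    rw [hAdiag]
    have := hWrow_le i
    linarith
  have hBnonneg : ∀ i j, 0 ≤ B i j := by
    intro i j
    simp only [hB]
    by_cases h : i = j
    · subst h
      rw [if_pos rfl]
      have := hAii_half i
      linarith
    · rw [if_neg h]
      have : A i j = Wgt E d i j := hAoff i j (Ne.symm h)
      have := hWnonneg i j
      simp only [sub_zero]
      linarith
  have hBrow : ∀ i, ∑ j, B i j = 1 := by
    intro i
    simp only [hB]
    rw [Finset.sum_sub_distrib, ← Finset.mul_sum, hArow]
    simp
    norm_num
  have hBcol : ∀ j, ∑ i, B i j = 1 := by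
    intro j
    simp only [hB]
    rw [Finset.sum_sub_distrib, ← Finset.mul_sum, hAcol]
    simp
    norm_num
  -- Jensen/contraction for B
  set b : Fin n → ℝ := fun i => ∑ j, B i j * y j with hbdef
  have hJensen : ∀ i, (b i) ^ 2 ≤ ∑ j, B i j * (y j) ^ 2 := by
    intro i
    have := Finset.sum_sq_le_sum_mul_sum_of_sq_eq_mul Finset.univ
      (r := fun j => B i j * y j) (f := fun j => B i j) (g := fun j => B i j * (y j) ^ 2)
      (fun j _ => hBnonneg i j) (fun j _ => mul_nonneg (hBnonneg i j) (sq_nonneg _))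
      (fun j _ => by ring)
    rw [hBrow i, one_mul] at this
    exact this
  have hBcontr : ∑ i, (b i) ^ 2 ≤ ∑ j, (y j) ^ 2 := by
    calc ∑ i, (b i) ^ 2 ≤ ∑ i, ∑ j, B i j * (y j) ^ 2 :=
          Finset.sum_le_sum fun i _ => hJensen i
      _ = ∑ j, (∑ i, B i j) * (y j) ^ 2 := by
          rw [Finset.sum_comm]
          exact Finset.sum_congr rfl fun j _ => by rw [Finset.sum_mul]
      _ = ∑ j, (y j) ^ 2 := Finset.sum_congr rfl fun j _ => by rw [hBcol j, one_mul]
  -- z = (y + b)/2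
  have hz : ∀ i, A.mulVec y i = (y i + b i) / 2 := by
    intro i
    rw [hmv i, hbdef]
    have hAB : ∀ j, A i j * y j = ((B i j * y j) + (if i = j then 1 else 0) * y j) / 2 := by
      intro j
      simp only [hB]
      ring
    rw [Finset.sum_congr rfl fun j _ => hAB j, ← Finset.sum_div, Finset.sum_add_distrib]
    have : ∑ j, (if i = j then (1:ℝ) else 0) * y j = y i := by
      rw [Finset.sum_congr rfl fun j _ => (ite_mul (i = j) (1:ℝ) 0 (y j))]
      simp [Finset.sum_ite_eq]
    rw [this]
    ring
  -- Dirichlet identity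
  set S := ∑ a, ∑ c, Wgt E d a c * (y a - y c) ^ 2 with hSdef
  have hT : ∑ i, ∑ j, A i j * (y i - y j) ^ 2 = S := by
    rw [hSdef]
    refine Finset.sum_congr rfl fun i _ => Finset.sum_congr rfl fun j _ => ?_
    by_cases h : j = i
    · subst h
      simp
    · rw [hAoff i j h]
  set P := ∑ i, ∑ j, A i j * y i * y j with hPdef
  have hPz : ∑ i, y i * A.mulVec y i = P := by
    rw [hPdef]
    refine Finset.sum_congr rfl fun i _ => ?_
    rw [hmv i, Finset.mul_sum]
    refine Finset.sum_congr rfl fun j _ => by ring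
  have hyz : ∑ i, y i * A.mulVec y i = ∑ i, (y i) ^ 2 - S / 2 := by
    have h2 : ∑ i, ∑ j, A i j * (y i) ^ 2 = ∑ i, (y i) ^ 2 := by
      refine Finset.sum_congr rfl fun i _ => ?_
      rw [← Finset.sum_mul, hArow, one_mul]
    have h3 : ∑ i, ∑ j, A i j * (y j) ^ 2 = ∑ j, (y j) ^ 2 := by
      rw [Finset.sum_comm]
      refine Finset.sum_congr rfl fun j _ => ?_
      rw [← Finset.sum_mul, hAcol, one_mul]
    have hinner : ∀ i, ∑ j, A i j * (y i - y j) ^ 2 =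
        (∑ j, A i j * (y i) ^ 2) + (∑ j, A i j * (y j) ^ 2)
          - 2 * ∑ j, A i j * y i * y j := by
      intro i
      have : ∀ j, A i j * (y i - y j) ^ 2 =
          A i j * (y i) ^ 2 + A i j * (y j) ^ 2 - 2 * (A i j * y i * y j) := fun j => by ring
      rw [Finset.sum_congr rfl fun j _ => this j, Finset.sum_sub_distrib,
        Finset.sum_add_distrib, ← Finset.mul_sum]
    have houter : ∑ i, ∑ j, A i j * (y i - y j) ^ 2 =
        (∑ i, ∑ j, A i j * (y i) ^ 2) + (∑ i, ∑ j, A i j * (y j) ^ 2) - 2 * P := by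
      rw [Finset.sum_congr rfl fun i _ => hinner i, Finset.sum_sub_distrib,
        Finset.sum_add_distrib, ← Finset.mul_sum, hPdef]
    rw [hT, h2, h3] at houter
    rw [hPz]
    linarith
  -- combine
  have hsumz : ∑ i, A.mulVec y i = 0 := by
    have : ∑ i, A.mulVec y i = ∑ j, (∑ i, A i j) * y j := by
      rw [Finset.sum_congr rfl fun i _ => hmv i, Finset.sum_comm]
      exact Finset.sum_congr rfl fun j _ => by rw [Finset.sum_mul]
    rw [this]
    calc ∑ j, (∑ i, A i j) * y j = ∑ j, y j :=
          Finset.sum_congr rfl fun j _ => by rw [hAcol j, one_mul]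
      _ = 0 := hy
  refine ⟨?_, hsumz⟩
  have hyb : ∑ i, y i * A.mulVec y i = (∑ i, (y i) ^ 2 + ∑ i, y i * b i) / 2 := by
    have h : ∀ i, y i * A.mulVec y i = ((y i) ^ 2 + y i * b i) / 2 := fun i => by
      rw [hz i]; ring
    rw [Finset.sum_congr rfl fun i _ => h i, ← Finset.sum_div, Finset.sum_add_distrib]
  have hzsq : ∑ i, (A.mulVec y i) ^ 2 =
      (∑ i, (y i) ^ 2 + 2 * ∑ i, y i * b i + ∑ i, (b i) ^ 2) / 4 := by
    have h : ∀ i, (A.mulVec y i) ^ 2 =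
        ((y i) ^ 2 + 2 * (y i * b i) + (b i) ^ 2) / 4 := fun i => by
      rw [hz i]; ring
    rw [Finset.sum_congr rfl fun i _ => h i, ← Finset.sum_div, Finset.sum_add_distrib,
      Finset.sum_add_distrib, ← Finset.mul_sum]
  -- ‖Ay‖² ≤ ∑ y² - S/2
  have hkey : ∑ i, (A.mulVec y i) ^ 2 ≤ ∑ i, (y i) ^ 2 - S / 2 := by
    rw [hzsq, ← hyz, hyb]
    linarith [hBcontr]
  have hS0 : 0 ≤ S := by
    apply Finset.sum_nonneg
    intro a _
    exact Finset.sum_nonneg fun c _ => mul_nonneg (hWnonneg a c) (sq_nonneg _)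
  have hy2nonneg : 0 ≤ ∑ i, (y i) ^ 2 := Finset.sum_nonneg fun i _ => sq_nonneg _
  have hnR : (1 : ℝ) ≤ (n : ℝ) := by exact_mod_cast hn
  rcases Nat.lt_or_ge n 2 with hn1 | hn2
  · -- n = 1 : y is identically 0
    have hn1' : n = 1 := by omega
    subst hn1'
    have hy0 : ∀ i : Fin 1, y i = 0 := by
      intro i
      have : y i = ∑ k : Fin 1, y k := by
        rw [Finset.sum_eq_single_of_mem i (Finset.mem_univ i)]
        intro k _ hk
        exact absurd (Subsingleton.elim k i) hk
      rw [this, hy]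
    have hz0 : ∀ i : Fin 1, A.mulVec y i = 0 := by
      intro i
      rw [hmv i]
      apply Finset.sum_eq_zero
      intro j _
      rw [hy0 j, mul_zero]
    have hl : ∑ i, (A.mulVec y i) ^ 2 = 0 :=
      Finset.sum_eq_zero fun i _ => by rw [hz0 i]; ring
    have hr : ∑ i : Fin 1, (y i) ^ 2 = 0 :=
      Finset.sum_eq_zero fun i _ => by rw [hy0 i]; ring
    rw [hl, hr]
    simp
  · -- n ≥ 2 : use the Poincaré inequality
    have hpoin := poincare hn2 hconn hsymm hrefl d hd y hy
    rw [← hSdef] at hpoin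
    have hn2R : (2 : ℝ) ≤ (n : ℝ) := by exact_mod_cast hn2
    have hnsq : (0 : ℝ) < (n : ℝ) ^ 2 := by positivity
    have hSlow : (∑ i, (y i) ^ 2) / (6 * (n : ℝ) ^ 2) ≤ S := by
      rw [div_le_iff₀ (by positivity)]
      nlinarith
    have h37 : 1 / (37 * (n : ℝ) ^ 2) * ∑ i, (y i) ^ 2 ≤ S / 2 := by
      rw [div_le_iff₀ (by positivity)] at hSlow
      rw [div_mul_eq_mul_div, div_le_div_iff₀ (by positivity) (by norm_num)]
      nlinarith
    calc ∑ i, (A.mulVec y i) ^ 2 ≤ ∑ i, (y i) ^ 2 - S / 2 := hkey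
      _ ≤ ∑ i, (y i) ^ 2 - 1 / (37 * (n : ℝ) ^ 2) * ∑ i, (y i) ^ 2 := by linarith
      _ = (1 - 1 / (37 * (n : ℝ) ^ 2)) * ∑ i, (y i) ^ 2 := by ring

end Step

lemma metro_rowsum {n : ℕ} {E : Fin n → Fin n → Prop} (d : Fin n → ℕ)
    (A : Matrix (Fin n) (Fin n) ℝ)
    (hA : ∀ i j, A i j =
      if j = i then
        1 - ∑ l ∈ Finset.univ.filter (fun l => l ≠ i ∧ E i l),
              1 / (2 * (max (d i) (d l) : ℝ))
      else if E i j then 1 / (2 * (max (d i) (d j) : ℝ)) else 0)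
    (i : Fin n) : ∑ j, A i j = 1 := by
  classical
  have hWdiag : Wgt E d i i = 0 := by simp [Wgt]
  have hAoff : ∀ j, j ≠ i → A i j = Wgt E d i j := by
    intro j hji
    rw [hA, if_neg hji]
    unfold Wgt
    by_cases h : E i j
    · rw [if_pos h, if_pos ⟨Ne.symm hji, h⟩]
    · rw [if_neg h, if_neg (fun h' => h h'.2)]
  have hWsum : ∑ j, Wgt E d i j =
      ∑ l ∈ Finset.univ.filter (fun l => l ≠ i ∧ E i l), 1 / (2 * (max (d i) (d l) : ℝ)) := by
    rw [Finset.sum_filter]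
    refine Finset.sum_congr rfl fun j _ => ?_
    unfold Wgt
    by_cases h : j ≠ i ∧ E i j
    · rw [if_pos h, if_pos ⟨Ne.symm h.1, h.2⟩]
    · rw [if_neg h, if_neg (fun h' => h ⟨Ne.symm h'.1, h'.2⟩)]
  have hAdiag : A i i = 1 - ∑ j, Wgt E d i j := by
    rw [hA, if_pos rfl, hWsum]
  have hsplit : ∀ j, A i j = (if j = i then (1 - ∑ l, Wgt E d i l) else 0) + Wgt E d i j := by
    intro j
    by_cases h : j = i
    · subst h
      rw [if_pos rfl, hAdiag, hWdiag, add_zero]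
    · rw [if_neg h, hAoff j h, zero_add]
  rw [Finset.sum_congr rfl fun j _ => hsplit j, Finset.sum_add_distrib]
  rw [Finset.sum_ite_eq' Finset.univ i (fun _ => 1 - ∑ l, Wgt E d i l)]
  simp

open Classical in
/-- With the lazy Metropolis weights, the consensus iteration satisfies
`‖x(t) - x̄ 1‖₂² ≤ (1 - 1/(37 n²))ᵗ ‖x(0) - x̄ 1‖₂²`. -/
theorem lazy_metropolis_contraction
    (n : ℕ) (hn : 0 < n)
    (E : Fin n → Fin n → Prop)
    (hE_symm : ∀ i j, E i j → E j i)
    (hE_refl : ∀ i, E i i)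
    (hE_conn : ∀ i j, Relation.ReflTransGen E i j)
    (d : Fin n → ℕ)
    (hd : ∀ i, d i = (Finset.univ.filter fun j => j ≠ i ∧ E i j).card)
    (A : Matrix (Fin n) (Fin n) ℝ)
    (hA : ∀ i j, A i j =
      if j = i then
        1 - ∑ l ∈ Finset.univ.filter (fun l => l ≠ i ∧ E i l),
              1 / (2 * (max (d i) (d l) : ℝ))
      else if E i j then 1 / (2 * (max (d i) (d j) : ℝ)) else 0)
    (x : ℕ → Fin n → ℝ)
    (hx : ∀ t, x (t + 1) = A.mulVec (x t))
    (xbar : ℝ) (hxbar : xbar = (∑ j, x 0 j) / n) :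
    ∀ t : ℕ, ∑ i, (x t i - xbar) ^ 2 ≤
      (1 - 1 / (37 * (n : ℝ) ^ 2)) ^ t * ∑ i, (x 0 i - xbar) ^ 2 := by
  have hnR : (1 : ℝ) ≤ (n : ℝ) := by exact_mod_cast hn
  have hnne : (n : ℝ) ≠ 0 := by positivity
  set c : ℝ := 1 - 1 / (37 * (n : ℝ) ^ 2) with hc
  have hc0 : 0 ≤ c := by
    rw [hc]
    have h1 : (37 : ℝ) ≤ 37 * (n : ℝ) ^ 2 := by nlinarith
    have h2 : 1 / (37 * (n : ℝ) ^ 2) ≤ 1 / 37 := by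
      apply one_div_le_one_div_of_le (by norm_num) h1
    linarith
  have hmean0 : ∑ i, (x 0 i - xbar) = 0 := by
    rw [Finset.sum_sub_distrib, Finset.sum_const, Finset.card_univ, Fintype.card_fin,
      nsmul_eq_mul, hxbar]
    field_simp
    ring
  suffices h : ∀ t : ℕ, (∑ i, (x t i - xbar) ^ 2 ≤ c ^ t * ∑ i, (x 0 i - xbar) ^ 2) ∧
      (∑ i, (x t i - xbar) = 0) from fun t => (h t).1
  intro t
  induction t with
  | zero =>
    exact ⟨by simp, hmean0⟩
  | succ t ih =>
    set y : Fin n → ℝ := fun i => x t i - xbar with hydef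
    have hstep := step_lemma hn hE_conn hE_symm hE_refl d hd A hA y ih.2
    have hnext : ∀ i, x (t + 1) i - xbar = A.mulVec y i := by
      intro i
      rw [hx t]
      have h1 : A.mulVec (x t) i = ∑ j, A i j * x t j := by
        simp [Matrix.mulVec, dotProduct]
      have h2 : A.mulVec y i = ∑ j, A i j * y j := by
        simp [Matrix.mulVec, dotProduct]
      rw [h1, h2]
      have h3 : ∑ j, A i j * y j = ∑ j, A i j * x t j - (∑ j, A i j) * xbar := by
        rw [Finset.sum_mul, ← Finset.sum_sub_distrib]
        refine Finset.sum_congr rfl fun j _ => ?_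
        simp only [hydef]
        ring
      rw [h3, metro_rowsum d A hA i, one_mul]
    constructor
    · calc ∑ i, (x (t + 1) i - xbar) ^ 2 = ∑ i, (A.mulVec y i) ^ 2 :=
            Finset.sum_congr rfl fun i _ => by rw [hnext i]
        _ ≤ c * ∑ i, (y i) ^ 2 := hstep.1
        _ ≤ c * (c ^ t * ∑ i, (x 0 i - xbar) ^ 2) :=
            mul_le_mul_of_nonneg_left ih.1 hc0
        _ = c ^ (t + 1) * ∑ i, (x 0 i - xbar) ^ 2 := by ring
    · calc ∑ i, (x (t + 1) i - xbar) = ∑ i, A.mulVec y i :=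
            Finset.sum_congr rfl fun i _ => by rw [hnext i]
        _ = 0 := hstep.2
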